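/- Let E be a finite-dimensional real inner product space, L a linear subspace (Submodule ℝ) of E, and K ⊆ E a nonempty compact set with K ⊆ L (as a set). Then for every ρ ≥ 0, the closed thickening Metric.cthickening ρ K is contained in the Minkowski sum K + (Metric.closedBall 0 ρ ∩ L) + (Metric.closedBall 0 ρ ∩ Lᗮ), where Lᗮ is the orthogonal complement of L. -/

import Mathlib

open Pointwise
theorem cthickening_subset_minkowski_decomposition
    {E : Type*} [NormedAddCommGroup E] [InnerProductSpace ℝ E]
    [FiniteDimensional ℝ E]
    (L : Submodule ℝ E) (K : Set E)
    (hKne : K.Nonempty) (hKc : IsCompact K) (hKL : K ⊆ (L : Set E))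
    (ρ : ℝ) (hρ : 0 ≤ ρ) :
    Metric.cthickening ρ K ⊆
      K + (Metric.closedBall 0 ρ ∩ (L : Set E))
        + (Metric.closedBall 0 ρ ∩ (Lᗮ : Set E)) := by
  intro x hx
  have hinf : Metric.infDist x K ≤ ρ := by
    have := (Metric.mem_cthickening_iff).mp hx
    have h := ENNReal.toReal_mono ENNReal.ofReal_ne_top this
    rwa [ENNReal.toReal_ofReal hρ] at h
  obtain ⟨k, hkK, hk⟩ := hKc.exists_infDist_eq_dist hKne x
  have hdist : dist x k ≤ ρ := hk ▸ hinf
  set u := x - k with hu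
  have hun : ‖u‖ ≤ ρ := by rw [hu]; rwa [← dist_eq_norm]
  set v : E := (Submodule.orthogonalProjectionOnto L u : E) with hv
  set w : E := u - v with hw
  have hvL : v ∈ L := (Submodule.orthogonalProjectionOnto L u).2
  have hwL : w ∈ Lᗮ := Submodule.sub_starProjection_mem_orthogonal (K := L) u
  have hvn : ‖v‖ ≤ ρ := by
    calc ‖v‖ ≤ 1 * ‖u‖ :=
          (Submodule.orthogonalProjectionOnto L).le_of_opNorm_le (Submodule.orthogonalProjectionOnto_norm_le L) u
      _ ≤ ρ := by simpa using hun
  have hwn : ‖w‖ ≤ ρ := by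
    have : w = (Submodule.orthogonalProjectionOnto Lᗮ u : E) := by
      exact (Submodule.starProjection_orthogonal_val (K := L) u).symm
    rw [this]
    calc ‖(Submodule.orthogonalProjectionOnto Lᗮ u : E)‖ ≤ 1 * ‖u‖ :=
          (Submodule.orthogonalProjectionOnto Lᗮ).le_of_opNorm_le (Submodule.orthogonalProjectionOnto_norm_le Lᗮ) u
      _ ≤ ρ := by simpa using hun
  have hxeq : x = k + v + w := by
    rw [hw, hu]; abel
  rw [hxeq]
  exact Set.add_mem_add (Set.add_mem_add hkK ⟨by simpa [Metric.mem_closedBall] using hvn, hvL⟩)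
    ⟨by simpa [Metric.mem_closedBall] using hwn, hwL⟩
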